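/- (Array-size-invariant doubling.) Let M ≥ 1 and let w_PA, w_PB : {0,…,M−1} → ℂ be arbitrary sequences. Define sequences w_A, w_B of length 2M by w_A(m) = −conj(w_PB(M−1−m)) and w_B(m) = conj(w_PA(M−1−m)) for 0 ≤ m ≤ M−1, and w_A(M+m) = w_PA(m), w_B(M+m) = w_PB(m) for 0 ≤ m ≤ M−1. Then for every ψ ∈ ℝ, |F_{w_A}(ψ)|² + |F_{w_B}(ψ)|² = 2·( |F_{w_PA}(ψ)|² + |F_{w_PB}(ψ)|² ); i.e. the doubled array preserves the shape of the protoarray's sum power pattern. -/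

import Mathlib

/-- The array factor of a length-`M` sequence `u` at spatial frequency `ψ`:
`F_u(ψ) = Σ_{m=0}^{M-1} u(m) · exp(i·m·ψ)`. -/
noncomputable def arrayFactor (M : ℕ) (u : ℕ → ℂ) (ψ : ℝ) : ℂ :=
  ∑ m ∈ Finset.range M, u m * Complex.exp (Complex.I * (m : ℂ) * (ψ : ℂ))

/-- The aperiodic autocorrelation of a length-`M` sequence `u` at shift `τ`:
`R_u(τ) = Σ_{m=0}^{M-1-τ} u(m) · conj(u(m+τ))`. -/
noncomputable def aacf (M : ℕ) (u : ℕ → ℂ) (τ : ℕ) : ℂ :=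
  ∑ m ∈ Finset.range (M - τ), u m * (starRingEnd ℂ) (u (m + τ))

lemma af_split (M : ℕ) (hM : 1 ≤ M) (p q w : ℕ → ℂ) (s : ℂ)
    (h1 : ∀ m < M, w m = s * (starRingEnd ℂ) (q (M - 1 - m)))
    (h2 : ∀ m < M, w (M + m) = p m) (ψ : ℝ) :
    arrayFactor (2 * M) w ψ =
      s * Complex.exp (Complex.I * ((M : ℂ) - 1) * ψ) *
        (starRingEnd ℂ) (arrayFactor M q ψ) +
      Complex.exp (Complex.I * (M : ℂ) * ψ) * arrayFactor M p ψ := by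
  unfold arrayFactor
  rw [two_mul, Finset.sum_range_add, map_sum, Finset.mul_sum, Finset.mul_sum]
  congr 1
  · rw [← Finset.sum_range_reflect
      (fun j => s * Complex.exp (Complex.I * ((M : ℂ) - 1) * ψ) *
        (starRingEnd ℂ) (q j * Complex.exp (Complex.I * (j : ℂ) * ψ))) M]
    apply Finset.sum_congr rfl
    intro m hm
    rw [Finset.mem_range] at hm
    rw [h1 _ hm]
    have hk : ((M - 1 - m : ℕ) : ℂ) = (M : ℂ) - 1 - (m : ℂ) := by
      have h : (M - 1 - m) + (m + 1) = M := by omega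
      have h2 := congrArg (Nat.cast : ℕ → ℂ) h
      push_cast at h2
      linear_combination h2
    rw [map_mul, ← Complex.exp_conj]
    have harg : (starRingEnd ℂ) (Complex.I * ((M - 1 - m : ℕ) : ℂ) * (ψ : ℂ)) =
        -(Complex.I * ((M - 1 - m : ℕ) : ℂ) * (ψ : ℂ)) := by
      simp [map_mul, Complex.conj_I, Complex.conj_ofReal]
    rw [harg]
    have hmul : Complex.exp (Complex.I * ((M : ℂ) - 1) * ψ) *
        Complex.exp (-(Complex.I * ((M - 1 - m : ℕ) : ℂ) * (ψ : ℂ))) =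
        Complex.exp (Complex.I * (m : ℂ) * ψ) := by
      rw [← Complex.exp_add]
      congr 1
      rw [hk]; ring
    linear_combination (-s) * (starRingEnd ℂ) (q (M - 1 - m)) * hmul
  · apply Finset.sum_congr rfl
    intro m hm
    rw [Finset.mem_range] at hm
    rw [h2 _ hm]
    push_cast
    have hmul : Complex.exp (Complex.I * (M : ℂ) * ψ) *
        Complex.exp (Complex.I * (m : ℂ) * ψ) =
        Complex.exp (Complex.I * ((M : ℂ) + m) * ψ) := by
      rw [← Complex.exp_add]; congr 1; ring
    linear_combination (-(p m)) * hmul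

/-- Array-size-invariant doubling: appending the companion array to the protoarray
doubles the sum power pattern while preserving its shape. -/
theorem asi_doubling (M : ℕ) (hM : 1 ≤ M) (wPA wPB wA wB : ℕ → ℂ)
    (hA1 : ∀ m < M, wA m = -(starRingEnd ℂ) (wPB (M - 1 - m)))
    (hB1 : ∀ m < M, wB m = (starRingEnd ℂ) (wPA (M - 1 - m)))
    (hA2 : ∀ m < M, wA (M + m) = wPA m)
    (hB2 : ∀ m < M, wB (M + m) = wPB m)
    (ψ : ℝ) :
    ‖arrayFactor (2 * M) wA ψ‖ ^ 2 +
        ‖arrayFactor (2 * M) wB ψ‖ ^ 2 =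
      2 * (‖arrayFactor M wPA ψ‖ ^ 2 +
            ‖arrayFactor M wPB ψ‖ ^ 2) := by
  have hA := af_split M hM wPA wPB wA (-1)
    (by intro m hm; rw [hA1 m hm]; ring) hA2 ψ
  have hB := af_split M hM wPB wPA wB 1
    (by intro m hm; rw [hB1 m hm]; ring) hB2 ψ
  set a := arrayFactor M wPA ψ with ha
  set b := arrayFactor M wPB ψ with hb
  set e1 := Complex.exp (Complex.I * ((M : ℂ) - 1) * ψ) with he1d
  set e2 := Complex.exp (Complex.I * (M : ℂ) * ψ) with he2d
  have he1 : Complex.normSq e1 = 1 := by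
    rw [he1d, Complex.normSq_eq_norm_sq, Complex.norm_exp]
    simp [Complex.mul_re, Complex.mul_im]
  have he2 : Complex.normSq e2 = 1 := by
    rw [he2d, Complex.normSq_eq_norm_sq, Complex.norm_exp]
    simp [Complex.mul_re, Complex.mul_im]
  rw [hA, hB, Complex.sq_norm, Complex.sq_norm, Complex.sq_norm, Complex.sq_norm,
    Complex.normSq_add, Complex.normSq_add]
  have h1 : Complex.normSq (-1 * e1 * (starRingEnd ℂ) b) = Complex.normSq b := by
    simp [Complex.normSq_mul, Complex.normSq_conj, he1]
  have h2 : Complex.normSq (1 * e1 * (starRingEnd ℂ) a) = Complex.normSq a := by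
    simp [Complex.normSq_mul, Complex.normSq_conj, he1]
  have h3 : Complex.normSq (e2 * a) = Complex.normSq a := by
    simp [Complex.normSq_mul, he2]
  have h4 : Complex.normSq (e2 * b) = Complex.normSq b := by
    simp [Complex.normSq_mul, he2]
  have hcross : (-1 * e1 * (starRingEnd ℂ) b * (starRingEnd ℂ) (e2 * a)) +
      (1 * e1 * (starRingEnd ℂ) a * (starRingEnd ℂ) (e2 * b)) = 0 := by
    rw [map_mul, map_mul]; ring
  have hre : (-1 * e1 * (starRingEnd ℂ) b * (starRingEnd ℂ) (e2 * a)).re +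
      (1 * e1 * (starRingEnd ℂ) a * (starRingEnd ℂ) (e2 * b)).re = 0 := by
    rw [← Complex.add_re, hcross, Complex.zero_re]
  rw [h1, h2, h3, h4]
  linarith [hre]
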